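/- arXiv:2401.14055 — 3 statements merged into one kernel-verified Lean document; each statement's English description precedes it below -/
import Mathlib

section
/- Let δ, γ : ℕ → ℝ satisfy 0 ≤ δ n, 0 ≤ γ n, and δ n + γ n < 1 for all n. Define S : ℕ → ℝ by S x = Σ_{y<x} γ y · Π_{z<y} δ z, and define e : ℕ → ℝ recursively by e 0 = 1 and e (x+1) = e x · δ x / (1 − γ x · e x). Then for every x ∈ ℕ: (i) 1 − S x > 0; (ii) 0 ≤ e x ≤ 1; (iii) 1 − γ x · e x > 0 (so the recursion is well defined); and (iv) e x = (Π_{z<x} δ z)/(1 − S x). -/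
open Finset in
/-- Closed form for the expected discount factor `e x = E[β^{τ(0,x)}]`:
with `S x = Σ_{y<x} γ y · Π_{z<y} δ z` and `e` defined by the recursion
`e 0 = 1`, `e (x+1) = e x · δ x / (1 − γ x · e x)`, one has, for all `x`:
`1 − S x > 0`, `0 ≤ e x ≤ 1`, `1 − γ x · e x > 0`, and
`e x = (Π_{z<x} δ z)/(1 − S x)`. -/
theorem stmt_5 (δ γ : ℕ → ℝ) (hδ : ∀ n, 0 ≤ δ n) (hγ : ∀ n, 0 ≤ γ n)
    (hsum : ∀ n, δ n + γ n < 1)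
    (e : ℕ → ℝ) (he0 : e 0 = 1)
    (heS : ∀ x, e (x + 1) = e x * δ x / (1 - γ x * e x)) :
    ∀ x : ℕ,
      0 < 1 - ∑ y ∈ range x, γ y * ∏ z ∈ range y, δ z ∧
      (0 ≤ e x ∧ e x ≤ 1) ∧
      0 < 1 - γ x * e x ∧
      e x = (∏ z ∈ range x, δ z) /
        (1 - ∑ y ∈ range x, γ y * ∏ z ∈ range y, δ z) := by
  set P : ℕ → ℝ := fun x => ∏ z ∈ range x, δ z with hP
  set S : ℕ → ℝ := fun x => ∑ y ∈ range x, γ y * ∏ z ∈ range y, δ z with hS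
  have hPnn : ∀ x, 0 ≤ P x := fun x => Finset.prod_nonneg fun i _ => hδ i
  -- main invariant by induction
  have key : ∀ x, 0 < 1 - S x ∧ P x ≤ 1 - S x ∧ e x = P x / (1 - S x) := by
    intro x
    induction x with
    | zero => simp [hP, hS, he0]
    | succ n ih =>
      obtain ⟨h1, h2, h3⟩ := ih
      have hδn := hδ n; have hγn := hγ n; have hsn := hsum n
      have hγlt : γ n < 1 := by linarith
      have hSsucc : S (n + 1) = S n + γ n * P n := by
        simp [hS, hP, Finset.sum_range_succ]
      have hPsucc : P (n + 1) = P n * δ n := by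
        simp [hP, Finset.prod_range_succ]
      have hγP : γ n * P n ≤ γ n * (1 - S n) := by
        apply mul_le_mul_of_nonneg_left h2 hγn
      have h1' : 0 < 1 - S (n + 1) := by
        rw [hSsucc]; nlinarith
      have h2' : P (n + 1) ≤ 1 - S (n + 1) := by
        rw [hSsucc, hPsucc]
        nlinarith [hPnn n]
      have hden : 1 - γ n * e n = (1 - S (n + 1)) / (1 - S n) := by
        rw [h3, hSsucc]
        field_simp
        ring
      have h3' : e (n + 1) = P (n + 1) / (1 - S (n + 1)) := by
        rw [heS n, hden, h3, hPsucc]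
        have hne : (1 - S n) ≠ 0 := ne_of_gt h1
        have hne' : (1 - S (n+1)) ≠ 0 := ne_of_gt h1'
        field_simp
      exact ⟨h1', h2', h3'⟩
  intro x
  obtain ⟨h1, h2, h3⟩ := key x
  have hex0 : 0 ≤ e x := by rw [h3]; exact div_nonneg (hPnn x) h1.le
  have hex1 : e x ≤ 1 := by
    rw [h3]; rw [div_le_one h1]; exact h2
  have hγx : γ x * e x < 1 := by
    have := hsum x; have := hδ x
    calc γ x * e x ≤ γ x * 1 := mul_le_mul_of_nonneg_left hex1 (hγ x)
    _ < 1 := by linarith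
  exact ⟨h1, ⟨hex0, hex1⟩, by linarith, h3⟩
end

section
/- Let δ, γ : ℕ → ℝ satisfy 0 < δ n, 0 ≤ γ n, and δ n + γ n < 1 for all n. Define S : ℕ → ℝ by S x = Σ_{y<x} γ y · Π_{z<y} δ z and e : ℕ → ℝ by e 0 = 1, e (x+1) = e x · δ x / (1 − γ x · e x). Then for all y ≤ x: Π_{h=y}^{x−1} ( δ h / (1 − γ h · e h) ) = ( Π_{h=y}^{x−1} δ h ) · (1 − S y)/(1 − S x). -/
open Finset in
lemma stmt_7_key (δ γ : ℕ → ℝ) (hδ : ∀ n, 0 < δ n) (hγ : ∀ n, 0 ≤ γ n)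
    (hsum : ∀ n, δ n + γ n < 1)
    (e : ℕ → ℝ) (he0 : e 0 = 1)
    (heS : ∀ x, e (x + 1) = e x * δ x / (1 - γ x * e x)) :
    ∀ x, (∏ z ∈ range x, δ z) ≤ (1 - ∑ i ∈ range x, γ i * ∏ z ∈ range i, δ z)
      ∧ e x = (∏ z ∈ range x, δ z) / (1 - ∑ i ∈ range x, γ i * ∏ z ∈ range i, δ z) := by
  intro x
  induction x with
  | zero => simp [he0]
  | succ n ih =>
    obtain ⟨hle, heq⟩ := ih
    have hP : 0 < ∏ z ∈ range n, δ z := Finset.prod_pos (fun i _ => hδ i)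
    have hT : 0 < 1 - ∑ i ∈ range n, γ i * ∏ z ∈ range i, δ z := lt_of_lt_of_le hP hle
    set P := ∏ z ∈ range n, δ z with hPdef
    set T := 1 - ∑ i ∈ range n, γ i * ∏ z ∈ range i, δ z with hTdef
    have hT' : (1 - ∑ i ∈ range (n+1), γ i * ∏ z ∈ range i, δ z) = T - γ n * P := by
      rw [Finset.sum_range_succ]; ring
    have hP' : (∏ z ∈ range (n+1), δ z) = P * δ n := Finset.prod_range_succ δ n
    have hle' : P * δ n ≤ T - γ n * P := by
      have h1 : P * δ n + γ n * P ≤ P := by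
        have := (hsum n).le
        nlinarith [hP.le, hγ n]
      linarith
    have hTpos' : 0 < T - γ n * P := lt_of_lt_of_le (mul_pos hP (hδ n)) hle'
    constructor
    · rw [hT', hP']; exact hle'
    · rw [heS n, heq, hT', hP']
      have h1 : 1 - γ n * (P / T) = (T - γ n * P) / T := by
        field_simp [hT.ne']
      rw [h1]
      field_simp [hT.ne', hTpos'.ne']

open Finset in
/-- Closed form for `E[β^{τ(y,x)}]`: with `S x = Σ_{y<x} γ y · Π_{z<y} δ z`
and `e` as in the recursion, for all `y ≤ x`,
`Π_{h=y}^{x−1} (δ h / (1 − γ h · e h)) = (Π_{h=y}^{x−1} δ h) · (1 − S y)/(1 − S x)`. -/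
theorem stmt_7 (δ γ : ℕ → ℝ) (hδ : ∀ n, 0 < δ n) (hγ : ∀ n, 0 ≤ γ n)
    (hsum : ∀ n, δ n + γ n < 1)
    (e : ℕ → ℝ) (he0 : e 0 = 1)
    (heS : ∀ x, e (x + 1) = e x * δ x / (1 - γ x * e x)) :
    ∀ x y : ℕ, y ≤ x →
      (∏ h ∈ Ico y x, δ h / (1 - γ h * e h)) =
        (∏ h ∈ Ico y x, δ h) *
          ((1 - ∑ i ∈ range y, γ i * ∏ z ∈ range i, δ z) /
           (1 - ∑ i ∈ range x, γ i * ∏ z ∈ range i, δ z)) := by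
  have key := stmt_7_key δ γ hδ hγ hsum e he0 heS
  have hP : ∀ n, (0:ℝ) < ∏ z ∈ range n, δ z := fun n => Finset.prod_pos (fun i _ => hδ i)
  have hT : ∀ n, (0:ℝ) < 1 - ∑ i ∈ range n, γ i * ∏ z ∈ range i, δ z :=
    fun n => lt_of_lt_of_le (hP n) (key n).1
  intro x y hyx
  induction x with
  | zero =>
    interval_cases y
    simp
  | succ n ih =>
    rcases Nat.lt_or_ge y (n+1) with h | h
    · have hyn : y ≤ n := Nat.lt_succ_iff.mp h
      rw [Finset.prod_Ico_succ_top hyn, Finset.prod_Ico_succ_top hyn, ih hyn]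
      have hstep : δ n / (1 - γ n * e n) =
          δ n * ((1 - ∑ i ∈ range n, γ i * ∏ z ∈ range i, δ z) /
            (1 - ∑ i ∈ range (n+1), γ i * ∏ z ∈ range i, δ z)) := by
        rw [(key n).2]
        have hTn := hT n
        have hTn1 := hT (n+1)
        have h1 : 1 - γ n * ((∏ z ∈ range n, δ z) / (1 - ∑ i ∈ range n, γ i * ∏ z ∈ range i, δ z))
            = (1 - ∑ i ∈ range (n+1), γ i * ∏ z ∈ range i, δ z) /
              (1 - ∑ i ∈ range n, γ i * ∏ z ∈ range i, δ z) := by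
          rw [Finset.sum_range_succ]
          field_simp
          ring
        rw [h1, div_div_eq_mul_div, mul_div_assoc]
      rw [hstep]
      have h2 := (hT n).ne'
      have h3 := (hT (n+1)).ne'
      field_simp [h2, h3]
    · have : y = n + 1 := le_antisymm hyx h
      subst this
      simp [div_self (ne_of_gt (hT (n+1)))]
end

section
/- Let δ, γ, κ : ℕ → ℝ with 0 ≤ δ n, 0 ≤ γ n, δ n + γ n < 1 for all n, and let B ∈ ℝ. Define S x = Σ_{y<x} γ y · Π_{z<y} δ z, e 0 = 1, e (x+1) = e x · δ x/(1 − γ x · e x), and define KK : ℕ → ℝ by KK 0 = 0 and KK (x+1) = KK x + e x · (κ x + γ x · (KK x + B))/(1 − γ x · e x). Then for every x ∈ ℕ: KK x = ( Σ_{y<x} (κ y + γ y · B) · Π_{z<y} δ z ) / (1 − S x). -/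
open Finset in
/-- Closed form for the expected discounted operation cost
`KK x = K(0,τ(0,x))`: with `e` and `KK` defined by the given recursions,
`KK x = (Σ_{y<x} (κ y + γ y·B)·Π_{z<y} δ z)/(1 − S x)` for all `x`. -/
theorem stmt_8 (δ γ κ : ℕ → ℝ) (hδ : ∀ n, 0 ≤ δ n) (hγ : ∀ n, 0 ≤ γ n)
    (hsum : ∀ n, δ n + γ n < 1) (B : ℝ)
    (e : ℕ → ℝ) (he0 : e 0 = 1)
    (heS : ∀ x, e (x + 1) = e x * δ x / (1 - γ x * e x))
    (KK : ℕ → ℝ) (hK0 : KK 0 = 0)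
    (hKS : ∀ x, KK (x + 1) =
      KK x + e x * (κ x + γ x * (KK x + B)) / (1 - γ x * e x)) :
    ∀ x : ℕ,
      KK x = (∑ y ∈ range x, (κ y + γ y * B) * ∏ z ∈ range y, δ z) /
        (1 - ∑ y ∈ range x, γ y * ∏ z ∈ range y, δ z) := by
  have hγ1 : ∀ n, γ n < 1 := fun n =>
    lt_of_le_of_lt (le_add_of_nonneg_left (hδ n)) (hsum n)
  suffices h : ∀ x,
      (∏ z ∈ range x, δ z) + (∑ y ∈ range x, γ y * ∏ z ∈ range y, δ z) ≤ 1 ∧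
      0 < 1 - ∑ y ∈ range x, γ y * ∏ z ∈ range y, δ z ∧
      e x = (∏ z ∈ range x, δ z) /
        (1 - ∑ y ∈ range x, γ y * ∏ z ∈ range y, δ z) ∧
      KK x = (∑ y ∈ range x, (κ y + γ y * B) * ∏ z ∈ range y, δ z) /
        (1 - ∑ y ∈ range x, γ y * ∏ z ∈ range y, δ z) by
    exact fun x => (h x).2.2.2
  intro x
  induction x with
  | zero => simp [he0, hK0]
  | succ n ih =>
    obtain ⟨hPS, hSpos, hen, hKn⟩ := ih
    set P := ∏ z ∈ range n, δ z with hP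
    set S := ∑ y ∈ range n, γ y * ∏ z ∈ range y, δ z with hS
    set N := ∑ y ∈ range n, (κ y + γ y * B) * ∏ z ∈ range y, δ z with hN
    have hPnn : 0 ≤ P := Finset.prod_nonneg fun i _ => hδ i
    have hPle : P ≤ 1 - S := by linarith
    -- new denominator positivity
    have hS' : ∑ y ∈ range (n+1), γ y * ∏ z ∈ range y, δ z = S + γ n * P := by
      rw [Finset.sum_range_succ]
    have hP' : ∏ z ∈ range (n+1), δ z = P * δ n := by
      rw [Finset.prod_range_succ]
    have hN' : ∑ y ∈ range (n+1), (κ y + γ y * B) * ∏ z ∈ range y, δ z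
        = N + (κ n + γ n * B) * P := by
      rw [Finset.sum_range_succ]
    have hkey : γ n * P ≤ γ n * (1 - S) := by
      exact mul_le_mul_of_nonneg_left hPle (hγ n)
    have hSpos' : 0 < 1 - (S + γ n * P) := by
      have : (1 - S) * (1 - γ n) > 0 := mul_pos hSpos (by linarith [hγ1 n])
      nlinarith
    have hden : 1 - γ n * e n = (1 - (S + γ n * P)) / (1 - S) := by
      rw [hen]; field_simp; ring
    have hdenne : (1 - γ n * e n) ≠ 0 := by
      rw [hden]; positivity
    refine ⟨?_, by rwa [hS'], ?_, ?_⟩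
    · rw [hP', hS']
      nlinarith [hsum n, mul_nonneg hPnn (hγ n)]
    · have hd2 : 1 - γ n * (P / (1 - S)) = (1 - (S + γ n * P)) / (1 - S) := by
        field_simp; ring
      rw [heS n, hen, hS', hP', hd2]
      have h1 : (1 - S) ≠ 0 := hSpos.ne'
      have h2 : (1 - (S + γ n * P)) ≠ 0 := hSpos'.ne'
      field_simp
    · have hd2 : 1 - γ n * (P / (1 - S)) = (1 - (S + γ n * P)) / (1 - S) := by
        field_simp; ring
      rw [hKS n, hKn, hen, hd2, hS', hN']
      have h1 : (1 - S) ≠ 0 := hSpos.ne'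
      have h2 : (1 - (S + γ n * P)) ≠ 0 := hSpos'.ne'
      rw [div_add_div _ _ h1 (div_ne_zero h2 h1), div_eq_div_iff (mul_ne_zero h1 (div_ne_zero h2 h1)) h2]
      field_simp
      ring
end
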